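/- Let C be a real n × n̂ matrix, and suppose that for every nonempty subset A of rows, the 'influence submatrix' C(A) — obtained from C by keeping only the rows in A and then deleting all columns that are entirely zero on those rows — has at least one column containing exactly one nonzero entry (equivalently, C(A) is never a 2-influence submatrix, where a 2-influence submatrix is one in which every column has at least 2 nonzero entries). Then the column reduction procedure applied to Cᵀ terminates in the void matrix; in particular C has full rank n when n ≤ n̂. -/

import Mathlib

open scoped Classical

/-- One step of the column reduction procedure on a fixed matrix `Q`. -/
noncomputable def crStep {m n : ℕ} (Q : Matrix (Fin m) (Fin n) ℝ)
    (st : Finset (Fin m) × Finset (Fin n)) : Finset (Fin m) × Finset (Fin n) :=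
  let J : Finset (Fin n) :=
    st.2.filter (fun j => ∃ i ∈ st.1, Q i j ≠ 0 ∧ ∀ j' ∈ st.2, j' ≠ j → Q i j' = 0)
  let C' := st.2 \ J
  (st.1.filter (fun i => ∃ j ∈ C', Q i j ≠ 0), C')

/-- The column reduction procedure, started from the full matrix, terminates
in the void (0 × 0) matrix. -/
def crReducesToVoid {m n : ℕ} (Q : Matrix (Fin m) (Fin n) ℝ) : Prop :=
  ∃ k : ℕ, (crStep Q)^[k] (Finset.univ, Finset.univ) = (∅, ∅)

/-- If for every nonempty set `A` of rows the influence submatrix `C(A)` has some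
column with exactly one nonzero entry (i.e. `C(A)` is never a 2-influence
submatrix), then the column reduction procedure applied to `C.transpose` terminates in
the void matrix; in particular `C` has full rank `n` when `n ≤ n̂`. -/
theorem stmt_11 {n nh : ℕ} (C : Matrix (Fin n) (Fin nh) ℝ)
    (h : ∀ A : Finset (Fin n), A.Nonempty →
      ∃ j : Fin nh, (∃ i ∈ A, C i j ≠ 0) ∧ (A.filter (fun i => C i j ≠ 0)).card = 1) :
    crReducesToVoid C.transpose ∧ (n ≤ nh → C.rank = n) := by
  constructor
  · set Q := C.transpose with hQ
    set st : ℕ → Finset (Fin nh) × Finset (Fin n) :=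
      fun k => (crStep Q)^[k] (Finset.univ, Finset.univ) with hst
    have hst_succ : ∀ k, st (k+1) = crStep Q (st k) := fun k =>
      Function.iterate_succ_apply' _ _ _
    have hQC : ∀ i j, Q i j = C j i := fun i j => rfl
    -- invariant: columns (of Q) with a nonzero entry in a kept column-index are kept rows
    have hinv : ∀ k, ∀ (i : Fin nh) (j : Fin n), j ∈ (st k).2 → C j i ≠ 0 → i ∈ (st k).1 := by
      intro k
      induction k with
      | zero => intro i j _ _; exact Finset.mem_univ _
      | succ k ih =>
        intro i j hj hne
        rw [hst_succ] at hj ⊢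
        simp only [crStep] at hj ⊢
        rw [Finset.mem_filter]
        refine ⟨ih i j (Finset.mem_sdiff.mp hj).1 hne, ⟨j, hj, hne⟩⟩
    -- strict decrease while nonempty
    have hdec : ∀ k, (st k).2.Nonempty → (st (k+1)).2.card < (st k).2.card := by
      intro k hk
      obtain ⟨j₀, ⟨i₀, hi₀A, hi₀ne⟩, hcard⟩ := h (st k).2 hk
      obtain ⟨i₁, hfil⟩ := Finset.card_eq_one.mp hcard
      have hi₀mem : i₀ ∈ (st k).2.filter (fun i => C i j₀ ≠ 0) :=
        Finset.mem_filter.mpr ⟨hi₀A, hi₀ne⟩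
      have hi₀eq : i₀ = i₁ := by
        have := hfil ▸ hi₀mem; exact Finset.mem_singleton.mp this
      -- i₀ is in J
      have hJ : i₀ ∈ (st k).2.filter
          (fun j => ∃ i ∈ (st k).1, Q i j ≠ 0 ∧ ∀ j' ∈ (st k).2, j' ≠ j → Q i j' = 0) := by
        refine Finset.mem_filter.mpr ⟨hi₀A, j₀, hinv k j₀ i₀ hi₀A hi₀ne, hi₀ne, ?_⟩
        intro j' hj' hj'ne
        by_contra hj'c
        have : j' ∈ (st k).2.filter (fun i => C i j₀ ≠ 0) :=
          Finset.mem_filter.mpr ⟨hj', hj'c⟩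
        have : j' = i₁ := Finset.mem_singleton.mp (hfil ▸ this)
        exact hj'ne (this.trans hi₀eq.symm)
      have hsub : (st (k+1)).2 ⊆ (st k).2 := by
        rw [hst_succ]; simp only [crStep]; exact Finset.sdiff_subset
      have hnotmem : i₀ ∉ (st (k+1)).2 := by
        rw [hst_succ]; simp only [crStep]
        intro hc
        exact (Finset.mem_sdiff.mp hc).2 hJ
      exact Finset.card_lt_card (Finset.ssubset_iff_of_subset hsub |>.mpr ⟨i₀, hi₀A, hnotmem⟩)
    -- card bound
    have hbound : ∀ k, (st k).2.card ≤ n - k := by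
      intro k
      induction k with
      | zero =>
        simpa using Finset.card_le_univ (st 0).2
      | succ k ih =>
        rcases Finset.eq_empty_or_nonempty (st k).2 with he | hne
        · have : (st (k+1)).2 = ∅ := by
            rw [hst_succ]; simp only [crStep]; rw [he]; simp
          simp [this]
        · have := hdec k hne
          omega
    have hempty : (st n).2 = ∅ := by
      have := hbound n
      simp only [Nat.sub_self, Nat.le_zero, Finset.card_eq_zero] at this
      exact this
    refine ⟨n + 1, ?_⟩
    show st (n+1) = (∅, ∅)
    rw [hst_succ]
    simp only [crStep]
    rw [hempty]
    simp [Prod.ext_iff]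
  · intro _
    have hli : LinearIndependent ℝ C := by
      refine Fintype.linearIndependent_iff.mpr ?_
      intro g hg
      by_contra hc
      push_neg at hc
      obtain ⟨i₀, hi₀⟩ := hc
      set A : Finset (Fin n) := Finset.univ.filter (fun i => g i ≠ 0) with hA
      have hAne : A.Nonempty := ⟨i₀, Finset.mem_filter.mpr ⟨Finset.mem_univ _, hi₀⟩⟩
      obtain ⟨j₀, ⟨i₁, hi₁A, hi₁ne⟩, hcard⟩ := h A hAne
      obtain ⟨i₂, hfil⟩ := Finset.card_eq_one.mp hcard
      have hi₁eq : i₁ = i₂ := Finset.mem_singleton.mp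
        (hfil ▸ Finset.mem_filter.mpr ⟨hi₁A, hi₁ne⟩)
      have hsum : ∑ i, g i * C i j₀ = 0 := by
        have := congrFun hg j₀
        simpa using this
      have hsum' : ∑ i, g i * C i j₀ = g i₁ * C i₁ j₀ := by
        rw [Finset.sum_eq_single i₁]
        · intro b _ hb
          by_cases hgb : g b = 0
          · rw [hgb]; ring
          · by_cases hcb : C b j₀ = 0
            · rw [hcb]; ring
            · exfalso
              have hbA : b ∈ A := Finset.mem_filter.mpr ⟨Finset.mem_univ _, hgb⟩
              have : b ∈ A.filter (fun i => C i j₀ ≠ 0) :=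
                Finset.mem_filter.mpr ⟨hbA, hcb⟩
              have : b = i₂ := Finset.mem_singleton.mp (hfil ▸ this)
              exact hb (this.trans hi₁eq.symm)
        · intro hni; exact absurd (Finset.mem_univ i₁) hni
      have hg₁ : g i₁ ≠ 0 := (Finset.mem_filter.mp hi₁A).2
      have : g i₁ * C i₁ j₀ = 0 := hsum' ▸ hsum
      exact hi₁ne (by
        rcases mul_eq_zero.mp this with h1 | h2
        · exact absurd h1 hg₁
        · exact h2)
    have := hli.rank_matrix
    simpa using this
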